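/- M-step joint optimality from componentwise optimality: Let N, P, K be positive integers, x : Fin N → EuclideanSpace ℝ (Fin P), y : Fin N → ℝ, and z : Fin N → Fin K an assignment such that each cluster is nonempty, with n k := |{i : z i = k}| > 0 for all k. Suppose π̂ k = n k / N, and for each k, β̂ k : EuclideanSpace ℝ (Fin P) and σ̂ k > 0 satisfy ∑_{i : z i = k} Real.log (φ (y i) (⟪x i, β⟫_ℝ) s) ≤ ∑_{i : z i = k} Real.log (φ (y i) (⟪x i, β̂ k⟫_ℝ) (σ̂ k)) for all β and all s > 0. Then for every θ = (π, β, σ) with π k > 0, ∑ k, π k = 1, σ k > 0, one has Lc(z, θ) ≤ Lc(z, (π̂, β̂, σ̂)); i.e., the componentwise M-step updates jointly maximize the complete-data log-likelihood for the fixed partition z. -/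

import Mathlib

open scoped BigOperators InnerProductSpace

/-- Gaussian density with mean `μ` and standard deviation `s`. -/
noncomputable def gauss (y μ s : ℝ) : ℝ :=
  (Real.sqrt (2 * Real.pi * s ^ 2))⁻¹ * Real.exp (-(y - μ) ^ 2 / (2 * s ^ 2))

/-- The parameter space `Θ` of the `K`-component mixture of Gaussian regressions:
mixing proportions, regression coefficients and standard deviations. -/
structure MixParams (P K : ℕ) where
  mix : Fin K → ℝ
  coef : Fin K → EuclideanSpace ℝ (Fin P)
  sd : Fin K → ℝ
  mix_pos : ∀ k, 0 < mix k
  mix_sum : ∑ k, mix k = 1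
  sd_pos : ∀ k, 0 < sd k

/-- The complete-data log-likelihood `Lc(z, θ)`. -/
noncomputable def Lc {N P K : ℕ} (x : Fin N → EuclideanSpace ℝ (Fin P)) (y : Fin N → ℝ)
    (z : Fin N → Fin K) (θ : MixParams P K) : ℝ :=
  ∑ i, (Real.log (θ.mix (z i)) +
    Real.log (gauss (y i) (⟪x i, θ.coef (z i)⟫_ℝ) (θ.sd (z i))))

/-- M-step joint optimality from componentwise optimality: the componentwise
updates (cluster proportions, within-cluster ML regression fits) jointly
maximize the complete-data log-likelihood for the fixed partition `z`. -/
theorem mstep_joint_optimal {N P K : ℕ} (hN : 0 < N) (hP : 0 < P) (hK : 0 < K)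
    (x : Fin N → EuclideanSpace ℝ (Fin P)) (y : Fin N → ℝ)
    (z : Fin N → Fin K)
    (n : Fin K → ℕ)
    (hn : ∀ k, n k = (Finset.univ.filter (fun i => z i = k)).card)
    (hnpos : ∀ k, 0 < n k)
    (θhat : MixParams P K)
    (hmix : ∀ k, θhat.mix k = (n k : ℝ) / N)
    (hopt : ∀ (k : Fin K) (β : EuclideanSpace ℝ (Fin P)) (s : ℝ), 0 < s →
      ∑ i ∈ Finset.univ.filter (fun i => z i = k),
          Real.log (gauss (y i) (⟪x i, β⟫_ℝ) s) ≤
        ∑ i ∈ Finset.univ.filter (fun i => z i = k),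
          Real.log (gauss (y i) (⟪x i, θhat.coef k⟫_ℝ) (θhat.sd k))) :
    ∀ θ : MixParams P K, Lc x y z θ ≤ Lc x y z θhat := by
  intro θ
  classical
  have hNpos : (0:ℝ) < N := Nat.cast_pos.mpr hN
  -- fiberwise decomposition of Lc
  have decomp : ∀ θ' : MixParams P K, Lc x y z θ' =
      ∑ k, ((n k : ℝ) * Real.log (θ'.mix k) +
        ∑ i ∈ Finset.univ.filter (fun i => z i = k),
          Real.log (gauss (y i) (⟪x i, θ'.coef k⟫_ℝ) (θ'.sd k))) := by
    intro θ'
    rw [Lc, ← Finset.sum_fiberwise Finset.univ z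
      (fun i => Real.log (θ'.mix (z i)) +
        Real.log (gauss (y i) (⟪x i, θ'.coef (z i)⟫_ℝ) (θ'.sd (z i))))]
    refine Finset.sum_congr rfl fun k _ => ?_
    have hfib : ∀ i ∈ Finset.univ.filter (fun i => z i = k),
        Real.log (θ'.mix (z i)) +
          Real.log (gauss (y i) (⟪x i, θ'.coef (z i)⟫_ℝ) (θ'.sd (z i))) =
        Real.log (θ'.mix k) +
          Real.log (gauss (y i) (⟪x i, θ'.coef k⟫_ℝ) (θ'.sd k)) := by
      intro i hi
      have : z i = k := by simpa using (Finset.mem_filter.mp hi).2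
      rw [this]
    rw [Finset.sum_congr rfl hfib, Finset.sum_add_distrib,
      Finset.sum_const, ← hn k, nsmul_eq_mul]
  rw [decomp θ, decomp θhat]
  have hsumn : (∑ k, (n k : ℝ)) = N := by
    have h0 : (Finset.univ : Finset (Fin N)).card =
        ∑ k, (Finset.univ.filter (fun i => z i = k)).card :=
      Finset.card_eq_sum_card_fiberwise (fun i _ => Finset.mem_univ (z i))
    have : ∑ k, n k = N := by
      simp only [hn]
      simpa using h0.symm
    exact_mod_cast congrArg (Nat.cast : ℕ → ℝ) this
  have gibbs : ∑ k, (n k : ℝ) * Real.log (θ.mix k) ≤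
      ∑ k, (n k : ℝ) * Real.log (θhat.mix k) := by
    have key : ∀ k : Fin K,
        (n k : ℝ) * Real.log (θ.mix k) - (n k : ℝ) * Real.log (θhat.mix k) ≤
        (N : ℝ) * θ.mix k - (n k : ℝ) := by
      intro k
      have hnk : (0:ℝ) < (n k : ℝ) := Nat.cast_pos.mpr (hnpos k)
      have ha : (0:ℝ) < θhat.mix k := θhat.mix_pos k
      have hπ : (0:ℝ) < θ.mix k := θ.mix_pos k
      have hratio : Real.log (θ.mix k / θhat.mix k) ≤ θ.mix k / θhat.mix k - 1 :=
        Real.log_le_sub_one_of_pos (div_pos hπ ha)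
      have hlog : Real.log (θ.mix k / θhat.mix k) =
          Real.log (θ.mix k) - Real.log (θhat.mix k) :=
        Real.log_div (ne_of_gt hπ) (ne_of_gt ha)
      have := mul_le_mul_of_nonneg_left hratio (le_of_lt hnk)
      calc (n k : ℝ) * Real.log (θ.mix k) - (n k : ℝ) * Real.log (θhat.mix k)
          = (n k : ℝ) * Real.log (θ.mix k / θhat.mix k) := by rw [hlog]; ring
        _ ≤ (n k : ℝ) * (θ.mix k / θhat.mix k - 1) := this
        _ = (n k : ℝ) * θ.mix k / θhat.mix k - (n k : ℝ) := by ring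
        _ = (N : ℝ) * θ.mix k - (n k : ℝ) := by
            rw [hmix k]
            field_simp
    have hsum := Finset.sum_le_sum (s := Finset.univ) (fun k _ => key k)
    have hrhs : ∑ k, ((N : ℝ) * θ.mix k - (n k : ℝ)) = 0 := by
      rw [Finset.sum_sub_distrib, ← Finset.mul_sum, θ.mix_sum, hsumn, mul_one, sub_self]
    rw [Finset.sum_sub_distrib, hrhs] at hsum
    linarith
  have h1 : ∑ k, ((n k : ℝ) * Real.log (θ.mix k) +
        ∑ i ∈ Finset.univ.filter (fun i => z i = k),
          Real.log (gauss (y i) (⟪x i, θ.coef k⟫_ℝ) (θ.sd k))) ≤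
      ∑ k, ((n k : ℝ) * Real.log (θ.mix k) +
        ∑ i ∈ Finset.univ.filter (fun i => z i = k),
          Real.log (gauss (y i) (⟪x i, θhat.coef k⟫_ℝ) (θhat.sd k))) :=
    Finset.sum_le_sum fun k _ =>
      add_le_add le_rfl (hopt k (θ.coef k) (θ.sd k) (θ.sd_pos k))
  refine le_trans h1 ?_
  rw [Finset.sum_add_distrib, Finset.sum_add_distrib]
  exact add_le_add gibbs le_rfl
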